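/- arXiv:2303.10246 — 3 statements merged into one kernel-verified Lean document; each statement's English description precedes it below -/
import Mathlib

section
/- Let n ≥ 1, let Ω ⊆ ℂⁿ be a bounded open set, let f : Ω → ℂ be holomorphic, and suppose there exists C > 0 such that for every p ∈ Ω, writing δ_p = dist(p, ∂Ω), one has f^♯(z) ≤ √C · δ_p / (δ_p² − ‖z − p‖²) for every z with ‖z − p‖ < δ_p. Let (p_j) be a sequence in Ω and (r_j) a sequence of positive reals with r_j / δ_{p_j} → 0, and suppose the functions g_j(ζ) = f(p_j + r_j·ζ) (each defined on the ball ‖ζ‖ < δ_{p_j}/r_j) converge, uniformly on every compact subset of ℂⁿ, to a function g : ℂⁿ → ℂ. Then g is constant. -/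
open Filter Metric

/-- The spherical derivative of a holomorphic function of several complex variables:
`f^♯(z) = ‖Df(z)‖ / (1 + |f(z)|²)`, where `Df(z)` is the complex Fréchet derivative. -/
noncomputable def sphericalDeriv {n : ℕ} (f : EuclideanSpace ℂ (Fin n) → ℂ)
    (z : EuclideanSpace ℂ (Fin n)) : ℝ :=
  ‖fderiv ℂ f z‖ / (1 + ‖f z‖ ^ 2)

set_option maxHeartbeats 1000000 in
/-- Let `Ω ⊆ ℂⁿ` be a bounded open set and `f` holomorphic on `Ω` satisfying, for some
`C > 0`, the bound `f^♯(z) ≤ √C·δ_p/(δ_p² − ‖z−p‖²)` on each ball `B(p, δ_p) ⊆ Ω`, with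
`δ_p = dist(p, ∂Ω)`.  If `p_j ∈ Ω`, `r_j > 0` with `r_j/δ_{p_j} → 0`, and the rescaled
functions `g_j(ζ) = f(p_j + r_j·ζ)` converge uniformly on every compact subset of `ℂⁿ`
to `g : ℂⁿ → ℂ`, then `g` is constant. -/
theorem limit_of_rescalings_const
    (n : ℕ) (hn : 1 ≤ n) (Ω : Set (EuclideanSpace ℂ (Fin n)))
    (hΩopen : IsOpen Ω) (hΩbdd : Bornology.IsBounded Ω)
    (f : EuclideanSpace ℂ (Fin n) → ℂ) (hf : DifferentiableOn ℂ f Ω)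
    (C : ℝ) (hC : 0 < C)
    (hbound : ∀ p ∈ Ω, ∀ z : EuclideanSpace ℂ (Fin n),
      ‖z - p‖ < infDist p Ωᶜ →
        sphericalDeriv f z ≤
          Real.sqrt C * infDist p Ωᶜ / ((infDist p Ωᶜ) ^ 2 - ‖z - p‖ ^ 2))
    (p : ℕ → EuclideanSpace ℂ (Fin n)) (hp : ∀ j, p j ∈ Ω)
    (r : ℕ → ℝ) (hr : ∀ j, 0 < r j)
    (hratio : Tendsto (fun j => r j / infDist (p j) Ωᶜ) atTop (nhds 0))
    (g : EuclideanSpace ℂ (Fin n) → ℂ)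
    (hconv : ∀ K : Set (EuclideanSpace ℂ (Fin n)), IsCompact K →
      TendstoUniformlyOn
        (fun j (ζ : EuclideanSpace ℂ (Fin n)) => f (p j + r j • ζ)) g atTop K) :
    ∃ c : ℂ, ∀ ζ : EuclideanSpace ℂ (Fin n), g ζ = c := by
  -- the complement of Ω is nonempty
  have hne : Ωᶜ.Nonempty := by
    obtain ⟨R, hR⟩ := hΩbdd.subset_closedBall 0
    refine ⟨EuclideanSpace.single ⟨0, hn⟩ ((|R| + 1 : ℝ) : ℂ), fun hmem => ?_⟩
    have h1 := hR hmem
    rw [Metric.mem_closedBall, dist_zero_right, EuclideanSpace.norm_single] at h1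
    simp only [Complex.norm_real, Real.norm_eq_abs] at h1
    have h2 : |R| + 1 ≤ R := by
      rwa [abs_of_nonneg (by positivity)] at h1
    linarith [le_abs_self R]
  have hδ : ∀ j, 0 < infDist (p j) Ωᶜ := fun j =>
    (hΩopen.isClosed_compl.notMem_iff_infDist_pos hne).mp (by simp [hp j])
  have hball : ∀ j, ball (p j) (infDist (p j) Ωᶜ) ⊆ Ω := by
    intro j x hx
    by_contra hxΩ
    exact absurd (infDist_le_dist_of_mem (Set.mem_compl hxΩ))
      (not_le.mpr (by rw [dist_comm]; exact hx))
  set δ := fun j => infDist (p j) Ωᶜ with hδdef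
  set F := fun j (w : EuclideanSpace ℂ (Fin n)) => f (p j + r j • w) with hF
  refine ⟨g 0, fun ζ => ?_⟩
  set K := closedBall (0 : EuclideanSpace ℂ (Fin n)) ‖ζ‖ with hK
  have hKc : IsCompact K := isCompact_closedBall _ _
  have hζK : ζ ∈ K := by simp [hK, mem_closedBall_zero_iff]
  have h0K : (0 : EuclideanSpace ℂ (Fin n)) ∈ K := by
    simp [hK, mem_closedBall_zero_iff, norm_nonneg]
  have hconvK := hconv K hKc
  -- eventually r j * ‖ζ‖ < δ j / 2
  have hsmall : ∀ᶠ j in atTop, r j * ‖ζ‖ < δ j / 2 := by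
    have h1 : ∀ᶠ j in atTop, r j / δ j < 1 / (2 * (‖ζ‖ + 1)) := by
      refine hratio.eventually (gt_mem_nhds ?_)
      positivity
    filter_upwards [h1] with j hj
    have hδj := hδ j
    have hrj := hr j
    have hpos : (0:ℝ) < 2 * (‖ζ‖ + 1) := by positivity
    rw [div_lt_iff₀ hδj] at hj
    have h2 : r j * (2 * (‖ζ‖ + 1)) < δ j := by
      calc r j * (2 * (‖ζ‖ + 1)) < 1 / (2 * (‖ζ‖ + 1)) * δ j * (2 * (‖ζ‖ + 1)) := by
            nlinarith
        _ = δ j := by field_simp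
    nlinarith [norm_nonneg ζ]
  -- g is continuous on K, hence bounded
  have hginΩ : ∀ᶠ j in atTop, ∀ w ∈ K, p j + r j • w ∈ Ω := by
    filter_upwards [hsmall] with j hj w hw
    apply hball j
    rw [mem_ball, dist_eq_norm]
    have : ‖p j + r j • w - p j‖ = r j * ‖w‖ := by
      rw [add_sub_cancel_left, norm_smul, Real.norm_eq_abs, abs_of_pos (hr j)]
    rw [this]
    have hwn : ‖w‖ ≤ ‖ζ‖ := mem_closedBall_zero_iff.mp hw
    have := hδ j
    nlinarith [hr j, (hr j).le]
  have hgcont : ContinuousOn g K := by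
    refine hconvK.continuousOn (Eventually.frequently ?_)
    filter_upwards [hginΩ] with j hj
    have hc : ContinuousOn (fun w : EuclideanSpace ℂ (Fin n) => p j + r j • w) K :=
      (continuous_const.add (continuous_const_smul _)).continuousOn
    exact hf.continuousOn.comp hc hj
  obtain ⟨B, hB⟩ := hKc.exists_bound_of_continuousOn hgcont
  have hB0 : 0 ≤ B := le_trans (norm_nonneg _) (hB 0 h0K)
  set A := (1 + (B + 1) ^ 2) * (4 / 3 * Real.sqrt C) * ‖ζ‖ with hA
  have hsqC : 0 ≤ Real.sqrt C := Real.sqrt_nonneg C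
  -- the key estimate
  have hclose : ∀ᶠ j in atTop, ∀ w ∈ K, dist (g w) (F j w) < 1 :=
    Metric.tendstoUniformlyOn_iff.mp hconvK 1 one_pos
  have hkey : ∀ᶠ j in atTop, ‖F j ζ - F j 0‖ ≤ A * (r j / δ j) := by
    filter_upwards [hsmall, hclose, hginΩ] with j hj hcl hin
    have hδj := hδ j
    have hrj := hr j
    set s := segment ℝ (p j) (p j + r j • ζ) with hs
    set M := (1 + (B + 1) ^ 2) * (4 / 3 * Real.sqrt C) / δ j with hM
    -- every point of s is of the form p j + r j • (b • ζ) with b ∈ [0,1]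
    have hmem : ∀ x ∈ s, ∃ b : ℝ, 0 ≤ b ∧ b ≤ 1 ∧ x = p j + r j • (b • ζ) := by
      rintro x ⟨a, b, ha, hb, hab, hx⟩
      refine ⟨b, hb, by linarith, ?_⟩
      have ha' : a = 1 - b := by linarith
      rw [← hx, ha']
      module
    have hxΩ : ∀ x ∈ s, x ∈ Ω := by
      intro x hx
      obtain ⟨b, hb0, hb1, hxe⟩ := hmem x hx
      rw [hxe]
      refine hin (b • ζ) ?_
      rw [mem_closedBall_zero_iff, norm_smul, Real.norm_eq_abs, abs_of_nonneg hb0]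
      nlinarith [norm_nonneg ζ]
    have hdiff : ∀ x ∈ s, DifferentiableAt ℂ f x := fun x hx =>
      hf.differentiableAt (hΩopen.mem_nhds (hxΩ x hx))
    have hfd : ∀ x ∈ s, ‖fderiv ℂ f x‖ ≤ M := by
      intro x hx
      obtain ⟨b, hb0, hb1, hxe⟩ := hmem x hx
      have hxnorm : ‖x - p j‖ = b * r j * ‖ζ‖ := by
        rw [hxe, add_sub_cancel_left, norm_smul, norm_smul, Real.norm_eq_abs,
          Real.norm_eq_abs, abs_of_pos hrj, abs_of_nonneg hb0]
        ring
      have hxlt : ‖x - p j‖ < δ j := by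
        rw [hxnorm]; nlinarith [norm_nonneg ζ]
      have hsd := hbound (p j) (hp j) x hxlt
      -- bound on ‖f x‖
      have hfx : ‖f x‖ ≤ B + 1 := by
        have hwK : b • ζ ∈ K := by
          rw [mem_closedBall_zero_iff, norm_smul, Real.norm_eq_abs, abs_of_nonneg hb0]
          nlinarith [norm_nonneg ζ]
        have h2 := hcl (b • ζ) hwK
        have h3 : f x = F j (b • ζ) := by rw [hxe]
        rw [h3]
        calc ‖F j (b • ζ)‖ = dist (F j (b • ζ)) 0 := (dist_zero_right _).symm
          _ ≤ dist (F j (b • ζ)) (g (b • ζ)) + dist (g (b • ζ)) 0 := dist_triangle _ _ _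
          _ = dist (g (b • ζ)) (F j (b • ζ)) + ‖g (b • ζ)‖ := by
              rw [dist_comm, dist_zero_right]
          _ ≤ 1 + B := add_le_add h2.le (hB _ hwK)
          _ = B + 1 := by ring
      -- denominator bound
      have hden : (3 / 4) * δ j ^ 2 ≤ δ j ^ 2 - ‖x - p j‖ ^ 2 := by
        have : ‖x - p j‖ ≤ δ j / 2 := by rw [hxnorm]; nlinarith [norm_nonneg ζ]
        nlinarith [norm_nonneg (x - p j)]
      have hrhs : Real.sqrt C * δ j / (δ j ^ 2 - ‖x - p j‖ ^ 2)
          ≤ 4 / 3 * Real.sqrt C / δ j := by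
        rw [div_le_div_iff₀ (by nlinarith) hδj]
        nlinarith [mul_le_mul_of_nonneg_left hden hsqC]
      have hsd2 : sphericalDeriv f x ≤ 4 / 3 * Real.sqrt C / δ j := le_trans hsd hrhs
      have hpos : (0 : ℝ) < 1 + ‖f x‖ ^ 2 := by positivity
      have hnorm_eq : ‖fderiv ℂ f x‖ = sphericalDeriv f x * (1 + ‖f x‖ ^ 2) := by
        rw [sphericalDeriv, div_mul_cancel₀ _ (ne_of_gt hpos)]
      rw [hnorm_eq, hM]
      have h1 : 1 + ‖f x‖ ^ 2 ≤ 1 + (B + 1) ^ 2 := by nlinarith [norm_nonneg (f x)]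
      have hsdnn : 0 ≤ sphericalDeriv f x := by
        rw [sphericalDeriv]; positivity
      calc sphericalDeriv f x * (1 + ‖f x‖ ^ 2)
          ≤ (4 / 3 * Real.sqrt C / δ j) * (1 + (B + 1) ^ 2) := by
            apply mul_le_mul hsd2 h1 (by positivity)
            positivity
        _ = (1 + (B + 1) ^ 2) * (4 / 3 * Real.sqrt C) / δ j := by ring
    have hsconv : Convex ℝ s := convex_segment _ _
    have h0s : p j ∈ s := left_mem_segment ℝ _ _
    have h1s : p j + r j • ζ ∈ s := right_mem_segment ℝ _ _
    have hmv := hsconv.norm_image_sub_le_of_norm_fderiv_le hdiff hfd h0s h1s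
    have hlen : ‖p j + r j • ζ - p j‖ = r j * ‖ζ‖ := by
      rw [add_sub_cancel_left, norm_smul, Real.norm_eq_abs, abs_of_pos hrj]
    have : ‖F j ζ - F j 0‖ = ‖f (p j + r j • ζ) - f (p j)‖ := by
      simp [hF]
    rw [this]
    calc ‖f (p j + r j • ζ) - f (p j)‖ ≤ M * ‖p j + r j • ζ - p j‖ := hmv
      _ = M * (r j * ‖ζ‖) := by rw [hlen]
      _ = A * (r j / δ j) := by rw [hM, hA]; field_simp
  -- conclude
  have htend : Tendsto (fun j => F j ζ - F j 0) atTop (nhds (g ζ - g 0)) :=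
    (hconvK.tendsto_at hζK).sub (hconvK.tendsto_at h0K)
  have htend0 : Tendsto (fun j => F j ζ - F j 0) atTop (nhds 0) := by
    apply squeeze_zero_norm' hkey
    have := hratio.const_mul A
    simpa using this
  have := tendsto_nhds_unique htend htend0
  exact sub_eq_zero.mp this
end

section
/- Let n ≥ 1 and let 𝔹ⁿ be the open unit ball of ℂⁿ. Let f : 𝔹ⁿ → ℂ be a normal holomorphic function, i.e., there exists C > 0 such that |Df(z)v| / (1 + |f(z)|²) ≤ C · √((1−‖z‖²)‖v‖² + |⟨z,v⟩|²)/(1−‖z‖²) for all z ∈ 𝔹ⁿ and v ∈ ℂⁿ. Let (p_j) be a sequence in 𝔹ⁿ and (r_j) positive reals with r_j / (1 − ‖p_j‖) → 0, and suppose the functions g_j(ζ) = f(p_j + r_j·ζ) converge, uniformly on every compact subset of ℂⁿ, to a function g : ℂⁿ → ℂ. Then g is constant. -/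
open Filter Metric

set_option maxHeartbeats 1000000 in

/-- Let `f` be a normal holomorphic function on the open unit ball `𝔹ⁿ ⊂ ℂⁿ`, i.e.
`|Df(z)v|/(1+|f(z)|²) ≤ C·√((1−‖z‖²)‖v‖² + |⟨z,v⟩|²)/(1−‖z‖²)` for some `C > 0`.
If `p_j ∈ 𝔹ⁿ`, `r_j > 0` with `r_j/(1−‖p_j‖) → 0`, and `g_j(ζ) = f(p_j + r_j·ζ)`
converge uniformly on every compact subset of `ℂⁿ` to `g : ℂⁿ → ℂ`, then `g` is
constant. -/
theorem limit_of_rescalings_of_normal_const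
    (n : ℕ) (hn : 1 ≤ n)
    (f : EuclideanSpace ℂ (Fin n) → ℂ)
    (hf : DifferentiableOn ℂ f (ball (0 : EuclideanSpace ℂ (Fin n)) 1))
    (C : ℝ) (hC : 0 < C)
    (hnormal : ∀ z ∈ ball (0 : EuclideanSpace ℂ (Fin n)) 1,
      ∀ v : EuclideanSpace ℂ (Fin n),
        ‖fderiv ℂ f z v‖ / (1 + ‖f z‖ ^ 2) ≤
          C * Real.sqrt ((1 - ‖z‖ ^ 2) * ‖v‖ ^ 2 + ‖(inner ℂ z v : ℂ)‖ ^ 2) /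
            (1 - ‖z‖ ^ 2))
    (p : ℕ → EuclideanSpace ℂ (Fin n))
    (hp : ∀ j, p j ∈ ball (0 : EuclideanSpace ℂ (Fin n)) 1)
    (r : ℕ → ℝ) (hr : ∀ j, 0 < r j)
    (hratio : Tendsto (fun j => r j / (1 - ‖p j‖)) atTop (nhds 0))
    (g : EuclideanSpace ℂ (Fin n) → ℂ)
    (hconv : ∀ K : Set (EuclideanSpace ℂ (Fin n)), IsCompact K →
      TendstoUniformlyOn
        (fun j (ζ : EuclideanSpace ℂ (Fin n)) => f (p j + r j • ζ)) g atTop K) :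
    ∃ c : ℂ, ∀ ζ : EuclideanSpace ℂ (Fin n), g ζ = c := by
  refine ⟨g 0, fun ζ => ?_⟩
  set F : ℕ → ℂ → ℂ := fun j w => f (p j + r j • (w • ζ)) with hFdef
  set G : ℂ → ℂ := fun w => g (w • ζ) with hGdef
  set U : Set ℂ := ball (0 : ℂ) 2 with hUdef
  have hUopen : IsOpen U := isOpen_ball
  have hpj : ∀ j, 0 < 1 - ‖p j‖ := fun j => by
    have := mem_ball_zero_iff.mp (hp j); linarith
  -- eventual smallness of the rescaling radius
  have hev : ∀ᶠ j in atTop, r j * (2 * ‖ζ‖) ≤ (1 - ‖p j‖) / 2 := by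
    have hε : (0 : ℝ) < 1 / (4 * ‖ζ‖ + 2) := by positivity
    filter_upwards [hratio.eventually (eventually_lt_nhds hε)] with j hj
    rw [div_lt_iff₀ (hpj j)] at hj
    have hζ := norm_nonneg ζ
    have h2 : 0 < 4 * ‖ζ‖ + 2 := by positivity
    rw [div_mul_eq_mul_div, lt_div_iff₀ h2] at hj
    nlinarith [hpj j, (hr j).le]
  -- points stay in the unit ball, with a quantitative gap
  have hzb : ∀ᶠ j in atTop, ∀ w ∈ U,
      ‖p j + r j • (w • ζ)‖ < 1 ∧ (1 - ‖p j‖) / 2 ≤ 1 - ‖p j + r j • (w • ζ)‖ := by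
    filter_upwards [hev] with j hj w hw
    have hw2 : ‖w‖ < 2 := mem_ball_zero_iff.mp hw
    have hsm : ‖r j • (w • ζ)‖ ≤ r j * (2 * ‖ζ‖) := by
      rw [norm_smul, norm_smul, Real.norm_of_nonneg (hr j).le]
      have : ‖w‖ * ‖ζ‖ ≤ 2 * ‖ζ‖ :=
        mul_le_mul_of_nonneg_right hw2.le (norm_nonneg ζ)
      exact mul_le_mul_of_nonneg_left this (hr j).le
    have htri : ‖p j + r j • (w • ζ)‖ ≤ ‖p j‖ + r j * (2 * ‖ζ‖) :=
      (norm_add_le _ _).trans (by linarith)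
    constructor
    · have := hpj j; linarith
    · linarith
  -- locally uniform convergence of the one-variable slices
  have hTLUO : TendstoLocallyUniformlyOn F G atTop U := by
    rw [tendstoLocallyUniformlyOn_iff_forall_isCompact hUopen]
    intro K hKU hK
    have hK' : IsCompact ((fun w : ℂ => w • ζ) '' K) :=
      hK.image (continuous_id.smul continuous_const)
    have h := (hconv _ hK').comp (fun w : ℂ => w • ζ)
    exact h.mono (Set.subset_preimage_image _ _)
  -- eventual differentiability of the slices
  have hFdiff : ∀ᶠ j in atTop, DifferentiableOn ℂ (F j) U := by
    filter_upwards [hzb] with j hj w hw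
    have hmem : p j + r j • (w • ζ) ∈ ball (0 : EuclideanSpace ℂ (Fin n)) 1 :=
      mem_ball_zero_iff.mpr (hj w hw).1
    have hfd : DifferentiableAt ℂ f (p j + r j • (w • ζ)) :=
      hf.differentiableAt (isOpen_ball.mem_nhds hmem)
    have hA : DifferentiableAt ℂ (fun w : ℂ => p j + r j • (w • ζ)) w := by
      apply (differentiableAt_const _).add
      exact ((differentiableAt_id.smul_const ζ).const_smul (r j))
    exact (hfd.comp w hA).differentiableWithinAt
  have hGdiff : DifferentiableOn ℂ G U := hTLUO.differentiableOn hFdiff hUopen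
  -- the derivative of the limit vanishes
  have hderivG : ∀ w ∈ U, deriv G w = 0 := by
    intro w hw
    have h1 : Tendsto (fun j => deriv (F j) w) atTop (nhds (deriv G w)) :=
      (hTLUO.deriv hFdiff hUopen).tendsto_at hw
    have hpt : Tendsto (fun j => F j w) atTop (nhds (G w)) := hTLUO.tendsto_at hw
    have hfzb : ∀ᶠ j in atTop, ‖F j w‖ ≤ ‖G w‖ + 1 := by
      filter_upwards [Metric.tendsto_nhds.mp hpt 1 one_pos] with j hj
      have := norm_le_norm_add_norm_sub' (F j w) (G w)
      rw [dist_eq_norm] at hj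
      linarith
    set M : ℝ := C * (Real.sqrt 2 * ‖ζ‖) * 2 * (1 + (‖G w‖ + 1) ^ 2) with hMdef
    have hbound : ∀ᶠ j in atTop, ‖deriv (F j) w‖ ≤ r j / (1 - ‖p j‖) * M := by
      filter_upwards [hzb, hfzb] with j hj hfj
      set z : EuclideanSpace ℂ (Fin n) := p j + r j • (w • ζ) with hzdef
      have hmem : z ∈ ball (0 : EuclideanSpace ℂ (Fin n)) 1 :=
        mem_ball_zero_iff.mpr (hj w hw).1
      have hz1 : ‖z‖ < 1 := (hj w hw).1
      have hgap : (1 - ‖p j‖) / 2 ≤ 1 - ‖z‖ := (hj w hw).2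
      have hfd : DifferentiableAt ℂ f z := hf.differentiableAt (isOpen_ball.mem_nhds hmem)
      -- compute the derivative of the slice
      have hA : HasDerivAt (fun w : ℂ => p j + r j • (w • ζ)) (r j • ζ) w := by
        have h0 : HasDerivAt (fun w : ℂ => w • (r j • ζ)) ((1 : ℂ) • (r j • ζ)) w :=
          (hasDerivAt_id w).smul_const (r j • ζ)
        have h0' : HasDerivAt (fun w : ℂ => w • (r j • ζ)) (r j • ζ) w := by
          rwa [one_smul] at h0
        have hfun : (fun w : ℂ => p j + r j • (w • ζ))
            = (fun w : ℂ => p j + w • (r j • ζ)) := by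
          funext u; rw [smul_comm]
        rw [hfun]
        exact h0'.const_add (p j)
      have hD : deriv (F j) w = fderiv ℂ f z (r j • ζ) :=
        (hfd.hasFDerivAt.comp_hasDerivAt w hA).deriv
      -- normality estimate
      have hnz : ‖fderiv ℂ f z ζ‖ / (1 + ‖f z‖ ^ 2) ≤
          C * Real.sqrt ((1 - ‖z‖ ^ 2) * ‖ζ‖ ^ 2 + ‖(inner ℂ z ζ : ℂ)‖ ^ 2) / (1 - ‖z‖ ^ 2) :=
        hnormal z hmem ζ
      have hz0 : (0 : ℝ) ≤ ‖z‖ := norm_nonneg z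
      have hden : 0 < 1 - ‖z‖ ^ 2 := by nlinarith
      have hpos : (0 : ℝ) < 1 + ‖f z‖ ^ 2 := by positivity
      have hsqrt : Real.sqrt ((1 - ‖z‖ ^ 2) * ‖ζ‖ ^ 2 + ‖(inner ℂ z ζ : ℂ)‖ ^ 2) ≤
          Real.sqrt 2 * ‖ζ‖ := by
        have hin : ‖(inner ℂ z ζ : ℂ)‖ ≤ ‖z‖ * ‖ζ‖ := norm_inner_le_norm (𝕜 := ℂ) z ζ
        have hin2 : ‖(inner ℂ z ζ : ℂ)‖ ^ 2 ≤ ‖ζ‖ ^ 2 := by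
          have h1 : ‖(inner ℂ z ζ : ℂ)‖ ≤ ‖ζ‖ := by
            refine hin.trans ?_
            nlinarith [norm_nonneg ζ]
          nlinarith [norm_nonneg (inner ℂ z ζ : ℂ)]
        have h1 : (1 - ‖z‖ ^ 2) * ‖ζ‖ ^ 2 + ‖(inner ℂ z ζ : ℂ)‖ ^ 2 ≤ 2 * ‖ζ‖ ^ 2 := by
          nlinarith [sq_nonneg ‖ζ‖]
        calc Real.sqrt ((1 - ‖z‖ ^ 2) * ‖ζ‖ ^ 2 + ‖(inner ℂ z ζ : ℂ)‖ ^ 2)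
            ≤ Real.sqrt (2 * ‖ζ‖ ^ 2) := Real.sqrt_le_sqrt h1
          _ = Real.sqrt 2 * ‖ζ‖ := by
              rw [Real.sqrt_mul (by norm_num), Real.sqrt_sq (norm_nonneg ζ)]
      -- put the pieces together
      have hfderiv : ‖fderiv ℂ f z ζ‖ ≤
          C * (Real.sqrt 2 * ‖ζ‖) / ((1 - ‖p j‖) / 2) * (1 + (‖G w‖ + 1) ^ 2) := by
        have step1 : ‖fderiv ℂ f z ζ‖ ≤
            C * Real.sqrt ((1 - ‖z‖ ^ 2) * ‖ζ‖ ^ 2 + ‖(inner ℂ z ζ : ℂ)‖ ^ 2) / (1 - ‖z‖ ^ 2)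
              * (1 + ‖f z‖ ^ 2) := by
          rw [div_le_iff₀ hpos] at hnz; exact hnz
        have hgap2 : (1 - ‖p j‖) / 2 ≤ 1 - ‖z‖ ^ 2 := by nlinarith
        have step2 : C * Real.sqrt ((1 - ‖z‖ ^ 2) * ‖ζ‖ ^ 2 + ‖(inner ℂ z ζ : ℂ)‖ ^ 2)
              / (1 - ‖z‖ ^ 2) ≤ C * (Real.sqrt 2 * ‖ζ‖) / ((1 - ‖p j‖) / 2) := by
          apply div_le_div₀ (by positivity)
            (mul_le_mul_of_nonneg_left hsqrt hC.le) (by linarith [hpj j]) hgap2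
        have hfz2 : 1 + ‖f z‖ ^ 2 ≤ 1 + (‖G w‖ + 1) ^ 2 := by
          have hfj' : ‖f z‖ ≤ ‖G w‖ + 1 := hfj
          nlinarith [norm_nonneg (f z)]
        calc ‖fderiv ℂ f z ζ‖ ≤ _ := step1
          _ ≤ C * (Real.sqrt 2 * ‖ζ‖) / ((1 - ‖p j‖) / 2) * (1 + (‖G w‖ + 1) ^ 2) := by
              apply mul_le_mul step2 hfz2 hpos.le
              exact div_nonneg (by positivity) (by linarith [hpj j])
      have hnorm : ‖deriv (F j) w‖ = r j * ‖fderiv ℂ f z ζ‖ := by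
        rw [hD, (fderiv ℂ f z).map_smul_of_tower, norm_smul, Real.norm_of_nonneg (hr j).le]
      rw [hnorm]
      have : r j * ‖fderiv ℂ f z ζ‖ ≤
          r j * (C * (Real.sqrt 2 * ‖ζ‖) / ((1 - ‖p j‖) / 2) * (1 + (‖G w‖ + 1) ^ 2)) :=
        mul_le_mul_of_nonneg_left hfderiv (hr j).le
      refine this.trans (le_of_eq ?_)
      have hne : (1 - ‖p j‖) ≠ 0 := (hpj j).ne'
      rw [hMdef]
      field_simp
    have hM0 : Tendsto (fun j => r j / (1 - ‖p j‖) * M) atTop (nhds 0) := by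
      simpa using hratio.mul_const M
    have h2 : Tendsto (fun j => deriv (F j) w) atTop (nhds 0) :=
      squeeze_zero_norm' hbound hM0
    exact tendsto_nhds_unique h1 h2
  -- conclude: G is constant on the ball
  have h0m : (0 : ℂ) ∈ U := by simp [hUdef]
  have h1m : (1 : ℂ) ∈ U := by
    simp only [hUdef, mem_ball_zero_iff]
    norm_num
  have hfw : ∀ x ∈ U, fderivWithin ℂ G U x = 0 := by
    intro x hx
    have hd : DifferentiableAt ℂ G x := hGdiff.differentiableAt (hUopen.mem_nhds hx)
    have hDA : HasDerivAt G 0 x := by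
      have := hd.hasDerivAt
      rwa [hderivG x hx] at this
    have hF0 : HasFDerivAt G (0 : ℂ →L[ℂ] ℂ) x := by
      have h := hDA.hasFDerivAt
      have he : (ContinuousLinearMap.toSpanSingleton ℂ (0 : ℂ)) = 0 := by
        ext y; simp
      rwa [he] at h
    exact hF0.hasFDerivWithinAt.fderivWithin (hUopen.uniqueDiffWithinAt hx)
  have hconst : G 1 = G 0 :=
    (convex_ball (0 : ℂ) 2).is_const_of_fderivWithin_eq_zero hGdiff hfw h1m h0m
  simpa [hGdef] using hconst
end

section
/- Let n ≥ 1 and let 𝔹ⁿ be the open unit ball of ℂⁿ. Let f : 𝔹ⁿ → ℂ be holomorphic and suppose there exist a sequence (p_j) in 𝔹ⁿ and positive reals (r_j) with r_j / (1 − ‖p_j‖) → 0 such that the functions ζ ↦ f(p_j + r_j·ζ) converge, uniformly on every compact subset of ℂⁿ, to a non-constant function g : ℂⁿ → ℂ. Then f is not normal: for every C > 0 there exist z ∈ 𝔹ⁿ and v ∈ ℂⁿ with |Df(z)v| / (1 + |f(z)|²) > C · √((1−‖z‖²)‖v‖² + |⟨z,v⟩|²)/(1−‖z‖²). -/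
open Filter Metric

/-- Let `f` be holomorphic on the open unit ball `𝔹ⁿ ⊂ ℂⁿ` and suppose there exist
`p_j ∈ 𝔹ⁿ` and `r_j > 0` with `r_j/(1−‖p_j‖) → 0` such that `ζ ↦ f(p_j + r_j·ζ)`
converge uniformly on every compact subset of `ℂⁿ` to a non-constant `g : ℂⁿ → ℂ`.
Then `f` is not normal: for every `C > 0` there are `z ∈ 𝔹ⁿ` and `v ∈ ℂⁿ` with
`|Df(z)v|/(1+|f(z)|²) > C·√((1−‖z‖²)‖v‖² + |⟨z,v⟩|²)/(1−‖z‖²)`. -/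
theorem not_normal_of_rescaling_limit_nonconstant
    (n : ℕ) (hn : 1 ≤ n)
    (f : EuclideanSpace ℂ (Fin n) → ℂ)
    (hf : DifferentiableOn ℂ f (ball (0 : EuclideanSpace ℂ (Fin n)) 1))
    (p : ℕ → EuclideanSpace ℂ (Fin n))
    (hp : ∀ j, p j ∈ ball (0 : EuclideanSpace ℂ (Fin n)) 1)
    (r : ℕ → ℝ) (hr : ∀ j, 0 < r j)
    (hratio : Tendsto (fun j => r j / (1 - ‖p j‖)) atTop (nhds 0))
    (g : EuclideanSpace ℂ (Fin n) → ℂ)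
    (hconv : ∀ K : Set (EuclideanSpace ℂ (Fin n)), IsCompact K →
      TendstoUniformlyOn
        (fun j (ζ : EuclideanSpace ℂ (Fin n)) => f (p j + r j • ζ)) g atTop K)
    (hgnc : ∃ a b : EuclideanSpace ℂ (Fin n), g a ≠ g b) :
    ∀ C > (0 : ℝ), ∃ z ∈ ball (0 : EuclideanSpace ℂ (Fin n)) 1,
      ∃ v : EuclideanSpace ℂ (Fin n),
        C * Real.sqrt ((1 - ‖z‖ ^ 2) * ‖v‖ ^ 2 + ‖(inner ℂ z v : ℂ)‖ ^ 2) /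
            (1 - ‖z‖ ^ 2) <
          ‖fderiv ℂ f z v‖ / (1 + ‖f z‖ ^ 2) := by
  intro C hC
  obtain ⟨a, b, hab⟩ := hgnc
  have hab' : a ≠ b := fun h => hab (by rw [h])
  set ε : ℝ := ‖g b - g a‖ with hεdef
  have hε0 : 0 < ε := norm_pos_iff.mpr (sub_ne_zero.mpr (Ne.symm hab))
  set d : ℝ := ‖b - a‖ with hddef
  have hd0 : 0 < d := norm_pos_iff.mpr (sub_ne_zero.mpr (Ne.symm hab'))
  set R : ℝ := max ‖a‖ ‖b‖ with hRdef
  have hR0 : 0 ≤ R := le_trans (norm_nonneg a) (le_max_left _ _)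
  set K : Set (EuclideanSpace ℂ (Fin n)) := closedBall 0 R with hKdef
  have hKc : IsCompact K := isCompact_closedBall 0 R
  have haK : a ∈ K := mem_closedBall_zero_iff.mpr (le_max_left _ _)
  have hbK : b ∈ K := mem_closedBall_zero_iff.mpr (le_max_right _ _)
  have hp1 : ∀ j, 0 < 1 - ‖p j‖ := fun j => by
    have := mem_ball_zero_iff.mp (hp j); linarith
  have h1 : ∀ᶠ j in atTop, r j * (R + 1) < (1 - ‖p j‖) / 2 := by
    have h' : Tendsto (fun j => r j / (1 - ‖p j‖) * (R + 1)) atTop (nhds 0) := by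
      simpa using hratio.mul_const (R + 1)
    filter_upwards [h'.eventually (gt_mem_nhds (show (0:ℝ) < 1/2 by norm_num))] with j hj
    have hpj := hp1 j
    rw [div_mul_eq_mul_div, div_lt_iff₀ hpj] at hj
    linarith
  have hFev : ∀ j, r j * (R + 1) < (1 - ‖p j‖) / 2 →
      ∀ ζ ∈ K, p j + r j • ζ ∈ ball (0 : EuclideanSpace ℂ (Fin n)) 1 := by
    intro j hj ζ hζ
    have hζR : ‖ζ‖ ≤ R := mem_closedBall_zero_iff.mp hζ
    have h2 : ‖p j + r j • ζ‖ ≤ ‖p j‖ + r j * ‖ζ‖ := by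
      calc ‖p j + r j • ζ‖ ≤ ‖p j‖ + ‖r j • ζ‖ := norm_add_le _ _
        _ = ‖p j‖ + r j * ‖ζ‖ := by rw [norm_smul, Real.norm_eq_abs, abs_of_pos (hr j)]
    have h3 : r j * ‖ζ‖ ≤ r j * R := mul_le_mul_of_nonneg_left hζR (hr j).le
    have h4 : r j * (R + 1) = r j * R + r j := by ring
    rw [mem_ball_zero_iff]
    have := hr j
    have hpj := hp1 j
    linarith
  have hFcont : ∀ᶠ j in atTop,
      ContinuousOn (fun ζ : EuclideanSpace ℂ (Fin n) => f (p j + r j • ζ)) K := by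
    filter_upwards [h1] with j hj
    refine (hf.continuousOn).comp ?_ (fun ζ hζ => hFev j hj ζ hζ)
    exact (continuous_const.add (continuous_id.const_smul (r j))).continuousOn
  have hgcont : ContinuousOn g K := (hconv K hKc).continuousOn hFcont.frequently
  obtain ⟨Mg, hMg⟩ := hKc.exists_bound_of_continuousOn hgcont
  set Mf : ℝ := Mg + ε with hMfdef
  set δ : ℝ := ε / (16 * C * d * (1 + Mf ^ 2)) with hδdef
  have hδ0 : 0 < δ := by positivity
  have h2 : ∀ᶠ j in atTop, ∀ ζ ∈ K, dist (g ζ) (f (p j + r j • ζ)) < ε / 4 :=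
    Metric.tendstoUniformlyOn_iff.mp (hconv K hKc) (ε / 4) (by positivity)
  have h3 : ∀ᶠ j in atTop, r j / (1 - ‖p j‖) < δ :=
    hratio.eventually (gt_mem_nhds hδ0)
  obtain ⟨j, h1j, h2j, h3j⟩ := (h1.and (h2.and h3)).exists
  set x : EuclideanSpace ℂ (Fin n) := p j + r j • a with hxdef
  set y : EuclideanSpace ℂ (Fin n) := p j + r j • b with hydef
  set M' : ℝ := ε / (4 * r j * d) with hM'def
  have hrj0 := hr j
  have hM'0 : 0 ≤ M' := by positivity
  have hrep : ∀ w ∈ segment ℝ x y, ∃ ζ ∈ K, w = p j + r j • ζ := by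
    rintro w ⟨u, t, hu, ht, hut, rfl⟩
    refine ⟨u • a + t • b,
      (convex_closedBall (0 : EuclideanSpace ℂ (Fin n)) R) haK hbK hu ht hut, ?_⟩
    have hmod : u • x + t • y = (u + t) • p j + r j • (u • a + t • b) := by
      rw [hxdef, hydef]; module
    rw [hmod, hut, one_smul]
  have hseg : ∀ w ∈ segment ℝ x y, w ∈ ball (0 : EuclideanSpace ℂ (Fin n)) 1 := by
    intro w hw
    obtain ⟨ζ, hζ, rfl⟩ := hrep w hw
    exact hFev j h1j ζ hζ
  have hxy : y - x = r j • (b - a) := by rw [hxdef, hydef]; module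
  have hnxy : ‖y - x‖ = r j * d := by
    rw [hxy, norm_smul, Real.norm_eq_abs, abs_of_pos (hr j), hddef]
  have hfyx : ε / 2 ≤ ‖f y - f x‖ := by
    have e1 : ‖g b - f y‖ < ε / 4 := by
      have h := h2j b hbK; rw [dist_eq_norm] at h; exact h
    have e2 : ‖f x - g a‖ < ε / 4 := by
      have h := h2j a haK; rw [dist_comm, dist_eq_norm] at h; exact h
    have htri : ε ≤ ‖g b - f y‖ + ‖f y - f x‖ + ‖f x - g a‖ := by
      calc ε = ‖(g b - f y) + (f y - f x) + (f x - g a)‖ := by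
              rw [hεdef]; congr 1; abel
        _ ≤ ‖g b - f y‖ + ‖f y - f x‖ + ‖f x - g a‖ := norm_add₃_le
    linarith
  have key : ∃ w ∈ segment ℝ x y, ∃ v : EuclideanSpace ℂ (Fin n),
      M' * ‖v‖ < ‖fderiv ℂ f w v‖ := by
    by_contra hcon
    push_neg at hcon
    have hder : ∀ w ∈ segment ℝ x y,
        HasFDerivWithinAt f ((fderiv ℂ f w).restrictScalars ℝ) (segment ℝ x y) w := by
      intro w hw
      exact (((hf.differentiableAt
        (isOpen_ball.mem_nhds (hseg w hw))).hasFDerivAt).restrictScalars ℝ).hasFDerivWithinAt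
    have hbd : ∀ w ∈ segment ℝ x y, ‖(fderiv ℂ f w).restrictScalars ℝ‖ ≤ M' := by
      intro w hw
      refine ContinuousLinearMap.opNorm_le_bound _ hM'0 (fun v => ?_)
      simpa using hcon w hw v
    have hle := (convex_segment x y).norm_image_sub_le_of_norm_hasFDerivWithin_le
      hder hbd (left_mem_segment ℝ x y) (right_mem_segment ℝ x y)
    rw [hnxy] at hle
    have hcalc : M' * (r j * d) = ε / 4 := by
      rw [hM'def]; field_simp
    rw [hcalc] at hle
    linarith
  obtain ⟨z, hzseg, v, hv⟩ := key
  obtain ⟨ζ, hζK, hzrep⟩ := hrep z hzseg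
  have hζR : ‖ζ‖ ≤ R := mem_closedBall_zero_iff.mp hζK
  have hz1' : ‖z‖ ≤ ‖p j‖ + r j * R := by
    rw [hzrep]
    calc ‖p j + r j • ζ‖ ≤ ‖p j‖ + ‖r j • ζ‖ := norm_add_le _ _
      _ ≤ ‖p j‖ + r j * R := by
          rw [norm_smul, Real.norm_eq_abs, abs_of_pos (hr j)]
          exact add_le_add (le_refl _) (mul_le_mul_of_nonneg_left hζR (hr j).le)
  have hzp : (1 - ‖p j‖) / 2 ≤ 1 - ‖z‖ := by
    have h4 : r j * (R + 1) = r j * R + r j := by ring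
    linarith
  have hz1 : ‖z‖ < 1 := by have := hp1 j; linarith
  have hzsq : ‖z‖ ^ 2 ≤ ‖z‖ := by
    have h := pow_le_pow_of_le_one (norm_nonneg z) hz1.le (by norm_num : 1 ≤ 2)
    simpa using h
  have hD : 0 < 1 - ‖z‖ ^ 2 := by linarith
  have hD2 : (1 - ‖p j‖) / 2 ≤ 1 - ‖z‖ ^ 2 := by linarith
  have hvne : v ≠ 0 := by
    rintro rfl
    simp at hv
  have hv0 : 0 < ‖v‖ := norm_pos_iff.mpr hvne
  have hfzb : ‖f z‖ ≤ Mf := by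
    have hclose := h2j ζ hζK
    rw [dist_eq_norm] at hclose
    have hgb := hMg ζ hζK
    have hns : ‖f z‖ - ‖g ζ‖ ≤ ‖f z - g ζ‖ := norm_sub_norm_le _ _
    rw [hzrep] at hns ⊢
    rw [norm_sub_rev] at hclose
    linarith
  have hip : ‖(inner ℂ z v : ℂ)‖ ≤ ‖z‖ * ‖v‖ := norm_inner_le_norm z v
  have hsq : Real.sqrt ((1 - ‖z‖ ^ 2) * ‖v‖ ^ 2 + ‖(inner ℂ z v : ℂ)‖ ^ 2) ≤ 2 * ‖v‖ := by
    have hb2 : (1 - ‖z‖ ^ 2) * ‖v‖ ^ 2 + ‖(inner ℂ z v : ℂ)‖ ^ 2 ≤ (2 * ‖v‖) ^ 2 := by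
      have h5 : ‖(inner ℂ z v : ℂ)‖ ^ 2 ≤ (‖z‖ * ‖v‖) ^ 2 :=
        pow_le_pow_left₀ (norm_nonneg _) hip 2
      rw [mul_pow] at h5
      have hz2le : ‖z‖ ^ 2 ≤ 1 := by linarith [norm_nonneg z]
      have h6 : ‖z‖ ^ 2 * ‖v‖ ^ 2 ≤ 1 * ‖v‖ ^ 2 :=
        mul_le_mul_of_nonneg_right hz2le (sq_nonneg _)
      have h7 : (0:ℝ) ≤ ‖z‖ ^ 2 * ‖v‖ ^ 2 := by positivity
      have h8 : (1 - ‖z‖ ^ 2) * ‖v‖ ^ 2 = ‖v‖ ^ 2 - ‖z‖ ^ 2 * ‖v‖ ^ 2 := by ring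
      have h9 : (2 * ‖v‖) ^ 2 = 4 * ‖v‖ ^ 2 := by ring
      have h10 : (0:ℝ) ≤ ‖v‖ ^ 2 := sq_nonneg _
      linarith
    calc Real.sqrt ((1 - ‖z‖ ^ 2) * ‖v‖ ^ 2 + ‖(inner ℂ z v : ℂ)‖ ^ 2)
        ≤ Real.sqrt ((2 * ‖v‖) ^ 2) := Real.sqrt_le_sqrt hb2
      _ = 2 * ‖v‖ := Real.sqrt_sq (by positivity)
  have hstep : 4 * C * ‖v‖ / (1 - ‖p j‖) < M' * ‖v‖ / (1 + Mf ^ 2) := by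
    have hA : r j * (16 * C * d * (1 + Mf ^ 2)) < ε * (1 - ‖p j‖) :=
      (div_lt_div_iff₀ (hp1 j) (by positivity)).mp h3j
    rw [div_lt_div_iff₀ (hp1 j) (by positivity), hM'def, div_mul_eq_mul_div,
      div_mul_eq_mul_div, lt_div_iff₀ (by positivity)]
    linarith [mul_lt_mul_of_pos_left hA hv0]
  have hfz2 : 1 + ‖f z‖ ^ 2 ≤ 1 + Mf ^ 2 := by
    have := pow_le_pow_left₀ (norm_nonneg (f z)) hfzb 2
    linarith
  refine ⟨z, mem_ball_zero_iff.mpr hz1, v, ?_⟩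
  calc C * Real.sqrt ((1 - ‖z‖ ^ 2) * ‖v‖ ^ 2 + ‖(inner ℂ z v : ℂ)‖ ^ 2) / (1 - ‖z‖ ^ 2)
      ≤ C * (2 * ‖v‖) / (1 - ‖z‖ ^ 2) :=
        (div_le_div_iff_of_pos_right hD).mpr (mul_le_mul_of_nonneg_left hsq hC.le)
    _ ≤ C * (2 * ‖v‖) / ((1 - ‖p j‖) / 2) :=
        div_le_div_of_nonneg_left (by positivity) (by linarith [hp1 j]) hD2
    _ = 4 * C * ‖v‖ / (1 - ‖p j‖) := by
        rw [div_div_eq_mul_div]; ring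
    _ < M' * ‖v‖ / (1 + Mf ^ 2) := hstep
    _ ≤ ‖fderiv ℂ f z v‖ / (1 + ‖f z‖ ^ 2) :=
        div_le_div₀ (norm_nonneg _) hv.le (by positivity) hfz2
end
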